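/- Let n be a natural number with n ≡ 1 (mod 8). For 0 ≤ k ≤ ⌊n/2⌋ define the rational numbers c_k = (−1)^(⌊k/2⌋) · (n + 1 − 2k)^(k mod 2) · (∏_{λ=1}^{⌊k/2⌋} ((n+1)² − (4λ−2)²)) / (4^k · k!) (the product being empty, hence 1, when ⌊k/2⌋ = 0). Then every c_k is an integer, and for all complex numbers x, y: x^n + y^n = (x + y) · ∑_{k=0}^{⌊n/2⌋} c_k · (x·y)^(⌊n/2⌋ − k) · (x² + y²)^k. -/

import Mathlib

private def elC (t k : ℕ) : ℤ := (-1)^(k/2) * ((t + k/2).choose k)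

private lemma pascal (a m : ℕ) : (a+1).choose (m+1) = a.choose m + a.choose (m+1) :=
  Nat.choose_succ_succ' a m

private lemma elC_zero {t k : ℕ} (h : 2*t < k) : elC t k = 0 := by
  have : (t + k/2).choose k = 0 := Nat.choose_eq_zero_of_lt (by omega)
  simp [elC, this]

private lemma keyNat (a b : ℕ) : (a+4).choose (b+4) + a.choose (b+4)
    = a.choose b + 4*((a+1).choose (b+2)) + 2*((a+2).choose (b+4)) := by
  have h1 : (a+4).choose (b+4) = (a+3).choose (b+3) + (a+3).choose (b+4) := pascal (a+3) (b+3)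
  have h2 : (a+3).choose (b+3) = (a+2).choose (b+2) + (a+2).choose (b+3) := pascal (a+2) (b+2)
  have h3 : (a+3).choose (b+4) = (a+2).choose (b+3) + (a+2).choose (b+4) := pascal (a+2) (b+3)
  have h4 : (a+2).choose (b+2) = (a+1).choose (b+1) + (a+1).choose (b+2) := pascal (a+1) (b+1)
  have h5 : (a+2).choose (b+3) = (a+1).choose (b+2) + (a+1).choose (b+3) := pascal (a+1) (b+2)
  have h6 : (a+2).choose (b+4) = (a+1).choose (b+3) + (a+1).choose (b+4) := pascal (a+1) (b+3)
  have h7 : (a+1).choose (b+1) = a.choose b + a.choose (b+1) := pascal a b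
  have h8 : (a+1).choose (b+2) = a.choose (b+1) + a.choose (b+2) := pascal a (b+1)
  have h9 : (a+1).choose (b+3) = a.choose (b+2) + a.choose (b+3) := pascal a (b+2)
  have h10 : (a+1).choose (b+4) = a.choose (b+3) + a.choose (b+4) := pascal a (b+3)
  rw [h1, h2, h3, h4, h5, h6, h7, h8, h9, h10]
  ring

private lemma elC_rec (t k : ℕ) : elC (t+4) (k+4)
    = elC (t+2) k - 4 * elC (t+2) (k+2) + 2 * elC (t+2) (k+4) - elC t (k+4) := by
  rcases Nat.even_or_odd' k with ⟨j, rfl | rfl⟩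
  · simp only [elC]
    rw [show (2*j+4)/2 = j+2 by omega, show (2*j+2)/2 = j+1 by omega,
      show 2*j/2 = j by omega,
      show t+4+(j+2) = t+j+2+4 by ring, show t+2+(j+1) = t+j+2+1 by ring,
      show t+2+(j+2) = t+j+2+2 by ring, show t+2+j = t+j+2 by ring,
      show t+(j+2) = t+j+2 by ring]
    have h0 : (((t+j+2+4).choose (2*j+4) : ℤ)) + ((t+j+2).choose (2*j+4) : ℤ)
        = ((t+j+2).choose (2*j) : ℤ) + 4*((t+j+2+1).choose (2*j+2))
          + 2*((t+j+2+2).choose (2*j+4)) := by exact_mod_cast keyNat (t+j+2) (2*j)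
    linear_combination ((-1:ℤ))^j * h0
  · simp only [elC]
    rw [show (2*j+1+4)/2 = j+2 by omega, show (2*j+1+2)/2 = j+1 by omega,
      show (2*j+1)/2 = j by omega,
      show t+4+(j+2) = t+j+2+4 by ring, show t+2+(j+1) = t+j+2+1 by ring,
      show t+2+(j+2) = t+j+2+2 by ring, show t+2+j = t+j+2 by ring,
      show t+(j+2) = t+j+2 by ring]
    have h0 : (((t+j+2+4).choose (2*j+1+4) : ℤ)) + ((t+j+2).choose (2*j+1+4) : ℤ)
        = ((t+j+2).choose (2*j+1) : ℤ) + 4*((t+j+2+1).choose (2*j+1+2))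
          + 2*((t+j+2+2).choose (2*j+1+4)) := by exact_mod_cast keyNat (t+j+2) (2*j+1)
    linear_combination ((-1:ℤ))^j * h0

private lemma cast2 (n : ℕ) : ((n.choose 2 : ℤ)) * 2 = n * (n - 1) := by
  induction n with
  | zero => simp
  | succ m ih =>
    have h : (m+1).choose 2 = m.choose 1 + m.choose 2 := pascal m 1
    rw [h]
    rw [Nat.choose_one_right] at *
    push_cast
    linear_combination ih

private lemma cast3 (n : ℕ) : ((n.choose 3 : ℤ)) * 6 = n * (n - 1) * (n - 2) := by
  induction n with
  | zero => simp
  | succ m ih =>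
    have h : (m+1).choose 3 = m.choose 2 + m.choose 3 := pascal m 2
    rw [h]
    push_cast
    linear_combination ih + 3 * cast2 m

private lemma i0 (t : ℕ) : (elC (t+4) 0 : ℂ) = 2*(elC (t+2) 0 : ℂ) - (elC t 0 : ℂ) := by
  simp [elC]
  norm_num

private lemma i1 (t : ℕ) : (elC (t+4) 1 : ℂ) = 2*(elC (t+2) 1 : ℂ) - (elC t 1 : ℂ) := by
  simp [elC, Nat.choose_one_right]
  push_cast
  ring

private lemma i2 (t : ℕ) : (elC (t+4) 2 : ℂ)
    = -4*(elC (t+2) 0 : ℂ) + 2*(elC (t+2) 2 : ℂ) - (elC t 2 : ℂ) := by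
  simp only [elC]
  norm_num
  have a1 : ((t+4+1).choose 2 : ℂ) * 2 = (t+4+1) * (t+4+1-1) := by exact_mod_cast cast2 (t+4+1)
  have a2 : ((t+2+1).choose 2 : ℂ) * 2 = (t+2+1) * (t+2+1-1) := by exact_mod_cast cast2 (t+2+1)
  have a3 : ((t+1).choose 2 : ℂ) * 2 = (t+1) * (t+1-1) := by exact_mod_cast cast2 (t+1)
  push_cast at a1 a2 a3 ⊢
  linear_combination (-1/2 : ℂ) * a1 + a2 - (1/2 : ℂ) * a3

private lemma i3 (t : ℕ) : (elC (t+4) 3 : ℂ)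
    = -4*(elC (t+2) 1 : ℂ) + 2*(elC (t+2) 3 : ℂ) - (elC t 3 : ℂ) := by
  simp only [elC]
  norm_num [Nat.choose_one_right]
  have a1 : ((t+4+1).choose 3 : ℂ) * 6 = (t+4+1) * (t+4+1-1) * (t+4+1-2) := by
    exact_mod_cast cast3 (t+4+1)
  have a2 : ((t+2+1).choose 3 : ℂ) * 6 = (t+2+1) * (t+2+1-1) * (t+2+1-2) := by
    exact_mod_cast cast3 (t+2+1)
  have a3 : ((t+1).choose 3 : ℂ) * 6 = (t+1) * (t+1-1) * (t+1-2) := by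
    exact_mod_cast cast3 (t+1)
  push_cast at a1 a2 a3 ⊢
  linear_combination (-1/6 : ℂ) * a1 + (1/3 : ℂ) * a2 - (1/6 : ℂ) * a3

private lemma sum_shift2 (f : ℕ → ℂ) (n : ℕ) :
    ∑ k ∈ Finset.range (n+2), f k = (∑ k ∈ Finset.range n, f (k+2)) + (f 0 + f 1) := by
  rw [show n+2 = (n+1)+1 from rfl, Finset.sum_range_succ' _ (n+1),
    Finset.sum_range_succ' _ n,
    Finset.sum_congr rfl (show ∀ k ∈ Finset.range n, f (k+1+1) = f (k+2) from fun k _ => rfl)]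
  norm_num
  ring

private lemma sum_shift4 (f : ℕ → ℂ) (n : ℕ) :
    ∑ k ∈ Finset.range (n+4), f k
      = (∑ k ∈ Finset.range n, f (k+4)) + (f 0 + f 1 + f 2 + f 3) := by
  rw [show n+4 = (n+2)+2 from rfl, sum_shift2, sum_shift2,
    Finset.sum_congr rfl (show ∀ k ∈ Finset.range n, f (k+2+2) = f (k+4) from fun k _ => rfl)]
  norm_num
  ring

private lemma d1 (p q : ℂ) (t : ℕ) :
    (elC t 1 : ℂ) * p^(2*t-1+8) * q^1 = (elC t 1 : ℂ) * p^(2*t+7) * q := by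
  match t with
  | 0 => norm_num [elC]
  | (t'+1) => rw [show 2*(t'+1)-1+8 = 2*(t'+1)+7 by omega, pow_one]

private lemma d2 (p q : ℂ) (t : ℕ) :
    (elC t 2 : ℂ) * p^(2*t-2+8) * q^2 = (elC t 2 : ℂ) * p^(2*t+6) * q^2 := by
  match t with
  | 0 => norm_num [show elC 0 2 = 0 from by decide]
  | (t'+1) => rw [show 2*(t'+1)-2+8 = 2*(t'+1)+6 by omega]

private lemma d3 (p q : ℂ) (t : ℕ) :
    (elC t 3 : ℂ) * p^(2*t-3+8) * q^3 = (elC t 3 : ℂ) * p^(2*t+5) * q^3 := by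
  match t with
  | 0 => norm_num [show elC 0 3 = 0 from by decide]
  | 1 => norm_num [show elC 1 3 = 0 from by decide]
  | (t'+2) => rw [show 2*(t'+2)-3+8 = 2*(t'+2)+5 by omega]

private lemma key_sum (p q : ℂ) (t : ℕ) :
    ∑ k ∈ Finset.range (2*t+9), (elC (t+4) k : ℂ) * p^(2*(t+4)-k) * q^k
      = (q^4 - 4*p^2*q^2 + 2*p^4)
          * ∑ k ∈ Finset.range (2*t+5), (elC (t+2) k : ℂ) * p^(2*(t+2)-k) * q^k
        - p^8 * ∑ k ∈ Finset.range (2*t+1), (elC t k : ℂ) * p^(2*t-k) * q^k := by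
  have hL : ∑ k ∈ Finset.range (2*t+9), (elC (t+4) k : ℂ) * p^(2*(t+4)-k) * q^k
      = (∑ k ∈ Finset.range (2*t+5), (elC (t+4) (k+4) : ℂ) * p^(2*(t+2)-k) * q^(k+4))
        + ((elC (t+4) 0 : ℂ) * p^(2*t+8) + (elC (t+4) 1 : ℂ) * p^(2*t+7) * q
          + (elC (t+4) 2 : ℂ) * p^(2*t+6) * q^2 + (elC (t+4) 3 : ℂ) * p^(2*t+5) * q^3) := by
    rw [show 2*t+9 = (2*t+5)+4 from rfl,
      sum_shift4 (fun k => (elC (t+4) k : ℂ) * p^(2*(t+4)-k) * q^k) (2*t+5)]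
    congr 1
    · refine Finset.sum_congr rfl (fun k hk => ?_)
      have hk' := Finset.mem_range.1 hk
      rw [show 2*(t+4)-(k+4) = 2*(t+2)-k by omega]
    · rw [show 2*(t+4)-0 = 2*t+8 by omega, show 2*(t+4)-1 = 2*t+7 by omega,
        show 2*(t+4)-2 = 2*t+6 by omega, show 2*(t+4)-3 = 2*t+5 by omega]
      ring
  have hA : q^4 * ∑ k ∈ Finset.range (2*t+5), (elC (t+2) k : ℂ) * p^(2*(t+2)-k) * q^k
      = ∑ k ∈ Finset.range (2*t+5), (elC (t+2) k : ℂ) * p^(2*(t+2)-k) * q^(k+4) := by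
    rw [Finset.mul_sum]
    exact Finset.sum_congr rfl (fun k _ => by ring)
  have hB : p^2*q^2 * ∑ k ∈ Finset.range (2*t+5), (elC (t+2) k : ℂ) * p^(2*(t+2)-k) * q^k
      = (∑ k ∈ Finset.range (2*t+5), (elC (t+2) (k+2) : ℂ) * p^(2*(t+2)-k) * q^(k+4))
        + ((elC (t+2) 0 : ℂ) * p^(2*t+6) * q^2 + (elC (t+2) 1 : ℂ) * p^(2*t+5) * q^3) := by
    rw [Finset.mul_sum,
      Finset.sum_congr rfl (show ∀ k ∈ Finset.range (2*t+5),
        p^2*q^2 * ((elC (t+2) k : ℂ) * p^(2*(t+2)-k) * q^k)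
          = (fun k => (elC (t+2) k : ℂ) * p^((2*(t+2)-k)+2) * q^(k+2)) k
        from fun k _ => by ring),
      show 2*t+5 = (2*t+3)+2 from rfl,
      sum_shift2 (fun k => (elC (t+2) k : ℂ) * p^((2*(t+2)-k)+2) * q^(k+2)) (2*t+3),
      Finset.sum_congr rfl (show ∀ k ∈ Finset.range (2*t+3),
        (elC (t+2) (k+2) : ℂ) * p^((2*(t+2)-(k+2))+2) * q^(k+2+2)
          = (fun k => (elC (t+2) (k+2) : ℂ) * p^(2*(t+2)-k) * q^(k+4)) k
        from fun k hk => by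
          have hk' := Finset.mem_range.1 hk
          rw [show (2*(t+2)-(k+2))+2 = 2*(t+2)-k by omega]),
      Finset.sum_subset (Finset.range_subset_range.2 (show 2*t+3 ≤ (2*t+3)+2 by omega))
        (fun k hk hk2 => by
          rw [elC_zero (show 2*(t+2) < k+2 by
            simp only [Finset.mem_range] at hk hk2; omega)]
          simp)]
    rw [show 2*(t+2)-0+2 = 2*t+6 by omega, show 2*(t+2)-1+2 = 2*t+3+2 by omega]
  have hC : p^4 * ∑ k ∈ Finset.range (2*t+5), (elC (t+2) k : ℂ) * p^(2*(t+2)-k) * q^k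
      = (∑ k ∈ Finset.range (2*t+5), (elC (t+2) (k+4) : ℂ) * p^(2*(t+2)-k) * q^(k+4))
        + ((elC (t+2) 0 : ℂ) * p^(2*t+8) + (elC (t+2) 1 : ℂ) * p^(2*t+7) * q
          + (elC (t+2) 2 : ℂ) * p^(2*t+6) * q^2 + (elC (t+2) 3 : ℂ) * p^(2*t+5) * q^3) := by
    rw [Finset.mul_sum,
      Finset.sum_congr rfl (show ∀ k ∈ Finset.range (2*t+5),
        p^4 * ((elC (t+2) k : ℂ) * p^(2*(t+2)-k) * q^k)
          = (fun k => (elC (t+2) k : ℂ) * p^((2*(t+2)-k)+4) * q^k) k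
        from fun k _ => by ring),
      show 2*t+5 = (2*t+1)+4 from rfl,
      sum_shift4 (fun k => (elC (t+2) k : ℂ) * p^((2*(t+2)-k)+4) * q^k) (2*t+1),
      Finset.sum_congr rfl (show ∀ k ∈ Finset.range (2*t+1),
        (elC (t+2) (k+4) : ℂ) * p^((2*(t+2)-(k+4))+4) * q^(k+4)
          = (fun k => (elC (t+2) (k+4) : ℂ) * p^(2*(t+2)-k) * q^(k+4)) k
        from fun k hk => by
          have hk' := Finset.mem_range.1 hk
          rw [show (2*(t+2)-(k+4))+4 = 2*(t+2)-k by omega]),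
      Finset.sum_subset (Finset.range_subset_range.2 (show 2*t+1 ≤ (2*t+1)+4 by omega))
        (fun k hk hk2 => by
          rw [elC_zero (show 2*(t+2) < k+4 by
            simp only [Finset.mem_range] at hk hk2; omega)]
          simp)]
    rw [show 2*(t+2)-0+4 = 2*t+8 by omega, show 2*(t+2)-1+4 = 2*t+7 by omega,
      show 2*(t+2)-2+4 = 2*t+6 by omega, show 2*(t+2)-3+4 = 2*t+1+4 by omega]
    norm_num
  have hD : p^8 * ∑ k ∈ Finset.range (2*t+1), (elC t k : ℂ) * p^(2*t-k) * q^k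
      = (∑ k ∈ Finset.range (2*t+5), (elC t (k+4) : ℂ) * p^(2*(t+2)-k) * q^(k+4))
        + ((elC t 0 : ℂ) * p^(2*t+8) + (elC t 1 : ℂ) * p^(2*t+7) * q
          + (elC t 2 : ℂ) * p^(2*t+6) * q^2 + (elC t 3 : ℂ) * p^(2*t+5) * q^3) := by
    rw [Finset.mul_sum,
      Finset.sum_congr rfl (show ∀ k ∈ Finset.range (2*t+1),
        p^8 * ((elC t k : ℂ) * p^(2*t-k) * q^k)
          = (fun k => (elC t k : ℂ) * p^((2*t-k)+8) * q^k) k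
        from fun k _ => by ring),
      Finset.sum_subset (Finset.range_subset_range.2 (show 2*t+1 ≤ (2*t+5)+4 by omega))
        (fun k hk hk2 => by
          rw [elC_zero (show 2*t < k by
            simp only [Finset.mem_range] at hk hk2; omega)]
          simp),
      sum_shift4 (fun k => (elC t k : ℂ) * p^((2*t-k)+8) * q^k) (2*t+5),
      Finset.sum_congr rfl (show ∀ k ∈ Finset.range (2*t+5),
        (elC t (k+4) : ℂ) * p^((2*t-(k+4))+8) * q^(k+4)
          = (fun k => (elC t (k+4) : ℂ) * p^(2*(t+2)-k) * q^(k+4)) k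
        from fun k hk => by
          by_cases hk2 : k+4 ≤ 2*t
          · rw [show (2*t-(k+4))+8 = 2*(t+2)-k by omega]
          · simp only [elC_zero (show 2*t < k+4 by omega), Int.cast_zero, zero_mul]),
      d1 p q t, d2 p q t, d3 p q t, show 2*t-0+8 = 2*t+8 by omega]
    norm_num
  have hmain : (∑ k ∈ Finset.range (2*t+5), (elC (t+4) (k+4) : ℂ) * p^(2*(t+2)-k) * q^(k+4))
      = (∑ k ∈ Finset.range (2*t+5), (elC (t+2) k : ℂ) * p^(2*(t+2)-k) * q^(k+4))
        - 4*(∑ k ∈ Finset.range (2*t+5), (elC (t+2) (k+2) : ℂ) * p^(2*(t+2)-k) * q^(k+4))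
        + 2*(∑ k ∈ Finset.range (2*t+5), (elC (t+2) (k+4) : ℂ) * p^(2*(t+2)-k) * q^(k+4))
        - (∑ k ∈ Finset.range (2*t+5), (elC t (k+4) : ℂ) * p^(2*(t+2)-k) * q^(k+4)) := by
    rw [Finset.mul_sum, Finset.mul_sum, ← Finset.sum_sub_distrib, ← Finset.sum_add_distrib,
      ← Finset.sum_sub_distrib]
    refine Finset.sum_congr rfl (fun k hk => ?_)
    have hrecC : (elC (t+4) (k+4) : ℂ) = (elC (t+2) k : ℂ) - 4*(elC (t+2) (k+2) : ℂ)
        + 2*(elC (t+2) (k+4) : ℂ) - (elC t (k+4) : ℂ) := by exact_mod_cast elC_rec t k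
    linear_combination (p^(2*(t+2)-k) * q^(k+4)) * hrecC
  have hbnd : (elC (t+4) 0 : ℂ) * p^(2*t+8) + (elC (t+4) 1 : ℂ) * p^(2*t+7) * q
        + (elC (t+4) 2 : ℂ) * p^(2*t+6) * q^2 + (elC (t+4) 3 : ℂ) * p^(2*t+5) * q^3
      = -4*((elC (t+2) 0 : ℂ) * p^(2*t+6) * q^2 + (elC (t+2) 1 : ℂ) * p^(2*t+5) * q^3)
        + 2*((elC (t+2) 0 : ℂ) * p^(2*t+8) + (elC (t+2) 1 : ℂ) * p^(2*t+7) * q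
          + (elC (t+2) 2 : ℂ) * p^(2*t+6) * q^2 + (elC (t+2) 3 : ℂ) * p^(2*t+5) * q^3)
        - ((elC t 0 : ℂ) * p^(2*t+8) + (elC t 1 : ℂ) * p^(2*t+7) * q
          + (elC t 2 : ℂ) * p^(2*t+6) * q^2 + (elC t 3 : ℂ) * p^(2*t+5) * q^3) := by
    linear_combination (p^(2*t+8)) * i0 t + (p^(2*t+7)*q) * i1 t
      + (p^(2*t+6)*q^2) * i2 t + (p^(2*t+5)*q^3) * i3 t
  rw [hL]
  linear_combination hmain - hA + 4*hB - 2*hC + hD + hbnd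

private noncomputable def Ssum (x y : ℂ) (t N : ℕ) : ℂ :=
  ∑ k ∈ Finset.range N, (elC t k : ℂ) * (x*y)^(2*t - k) * (x^2+y^2)^k

private lemma Ssum_rec (x y : ℂ) (t : ℕ) :
    Ssum x y (t+4) (2*t+9)
      = (x^8+y^8) * Ssum x y (t+2) (2*t+5) - (x*y)^8 * Ssum x y t (2*t+1) := by
  have h8 : x^8+y^8 = ((x^2+y^2)^4 - 4*(x*y)^2*(x^2+y^2)^2 + 2*(x*y)^4) := by ring
  rw [Ssum, Ssum, Ssum, h8]
  exact key_sum (x*y) (x^2+y^2) t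

private lemma eight_main (x y : ℂ) : ∀ u : ℕ,
    x^(8*u+1) + y^(8*u+1) = (x+y) * Ssum x y (2*u) (4*u+1) := by
  intro u
  induction u using Nat.strong_induction_on with
  | _ u ih =>
    match u with
    | 0 => norm_num [Ssum, elC]
    | 1 =>
      have e0 : elC 2 0 = 1 := by decide
      have e1 : elC 2 1 = 2 := by decide
      have e2 : elC 2 2 = -3 := by decide
      have e3 : elC 2 3 = -1 := by decide
      have e4 : elC 2 4 = 1 := by decide
      norm_num [Ssum, Finset.sum_range_succ, e0, e1, e2, e3, e4]
      ring
    | (u+2) =>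
      have ih1 := ih (u+1) (by omega)
      have ih0 := ih u (by omega)
      have hS := Ssum_rec x y (2*u)
      rw [show 2*(2*u)+9 = 4*u+9 by ring, show 2*(2*u)+5 = 4*u+5 by ring,
        show 2*(2*u)+1 = 4*u+1 by ring] at hS
      rw [show 8*(u+1)+1 = 8*u+9 by ring, show 2*(u+1) = 2*u+2 by ring,
        show 4*(u+1)+1 = 4*u+5 by ring] at ih1
      rw [show 8*(u+2)+1 = 8*u+17 by ring, show 2*(u+2) = 2*u+4 by ring,
        show 4*(u+2)+1 = 4*u+9 by ring]
      rw [hS]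
      linear_combination (x^8+y^8)*ih1 - (x*y)^8*ih0

private lemma prod_eq (t : ℕ) : ∀ j : ℕ, j ≤ t →
    ∏ l ∈ Finset.Icc 1 j, ((4*(t:ℚ)+2)^2 - (4*(l:ℚ)-2)^2)
      = 16^j * ((t+j).factorial : ℚ) / ((t-j).factorial : ℚ) := by
  intro j
  induction j with
  | zero =>
    intro _
    norm_num
    rw [div_self]
    exact Nat.cast_ne_zero.2 (Nat.factorial_ne_zero t)
  | succ j ihj =>
    intro hj
    rw [Finset.prod_Icc_succ_top (by omega : 1 ≤ j+1), ihj (by omega)]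
    obtain ⟨d, rfl⟩ : ∃ d, t = j+1+d := ⟨t-(j+1), by omega⟩
    rw [show j+1+d-j = d+1 by omega, show j+1+d-(j+1) = d by omega,
      show j+1+d+(j+1) = (j+1+d+j)+1 by ring, Nat.factorial_succ (j+1+d+j),
      show d+1 = d+1 from rfl, Nat.factorial_succ d]
    have hd : ((d.factorial : ℕ) : ℚ) ≠ 0 := Nat.cast_ne_zero.2 (Nat.factorial_ne_zero d)
    push_cast
    field_simp
    ring

private lemma coeff_eq (u k : ℕ) (hk : k ≤ 4*u) :
    (-1 : ℚ) ^ (k / 2) * (((8*u+1 : ℕ) : ℚ) + 1 - 2 * (k : ℚ)) ^ (k % 2) *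
        (∏ l ∈ Finset.Icc 1 (k / 2), ((((8*u+1 : ℕ) : ℚ) + 1) ^ 2 - (4 * (l : ℚ) - 2) ^ 2)) /
        (4 ^ k * (Nat.factorial k : ℚ))
      = ((elC (2*u) k : ℤ) : ℚ) := by
  have hcast : ((8*u+1 : ℕ) : ℚ) + 1 = 4*((2*u : ℕ):ℚ)+2 := by push_cast; ring
  simp only [hcast]
  rcases Nat.even_or_odd' k with ⟨j, rfl | rfl⟩
  · rw [show 2*j/2 = j by omega, show (2*j) % 2 = 0 by omega, pow_zero,
      prod_eq (2*u) j (by omega), elC, show 2*j/2 = j by omega]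
    push_cast
    rw [Nat.cast_choose ℚ (show 2*j ≤ 2*u+j by omega), show 2*u+j-2*j = 2*u-j by omega,
      show (4:ℚ)^(2*j) = 16^j from by rw [pow_mul]; norm_num]
    have h1 : ((Nat.factorial (2*u-j) : ℕ) : ℚ) ≠ 0 := Nat.cast_ne_zero.2 (Nat.factorial_ne_zero _)
    have h2 : ((Nat.factorial (2*j) : ℕ) : ℚ) ≠ 0 := Nat.cast_ne_zero.2 (Nat.factorial_ne_zero _)
    field_simp
  · obtain ⟨d, hd⟩ : ∃ d, 2*u = j+1+d := ⟨2*u-(j+1), by omega⟩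
    rw [show (2*j+1)/2 = j by omega, show (2*j+1) % 2 = 1 by omega, pow_one, hd,
      prod_eq (j+1+d) j (by omega), elC, show (2*j+1)/2 = j by omega,
      show j+1+d-j = d+1 by omega, Nat.factorial_succ d]
    push_cast
    rw [Nat.cast_choose ℚ (show 2*j+1 ≤ j+1+d+j by omega),
      show j+1+d+j-(2*j+1) = d by omega,
      show (4:ℚ)^(2*j+1) = 4*16^j from by
        rw [pow_succ, pow_mul]; norm_num; ring]
    have h1 : ((Nat.factorial d : ℕ) : ℚ) ≠ 0 := Nat.cast_ne_zero.2 (Nat.factorial_ne_zero _)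
    have h2 : ((Nat.factorial (2*j+1) : ℕ) : ℚ) ≠ 0 := Nat.cast_ne_zero.2 (Nat.factorial_ne_zero _)
    have h3 : ((d:ℚ)+1) ≠ 0 := by positivity
    field_simp
    ring

/-- The case `n ≡ 1 (mod 8)` of the Eight Levels Theorem. -/
theorem eight_levels_mod8_one (n : ℕ) (hn : n % 8 = 1) (c : ℕ → ℚ)
    (hc : ∀ k ≤ n / 2,
      c k = (-1 : ℚ) ^ (k / 2) * ((n : ℚ) + 1 - 2 * (k : ℚ)) ^ (k % 2) *
        (∏ l ∈ Finset.Icc 1 (k / 2), (((n : ℚ) + 1) ^ 2 - (4 * (l : ℚ) - 2) ^ 2)) /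
        (4 ^ k * (Nat.factorial k : ℚ))) :
    (∀ k ≤ n / 2, ∃ z : ℤ, c k = (z : ℚ)) ∧
    ∀ x y : ℂ, x ^ n + y ^ n =
      (x + y) * ∑ k ∈ Finset.range (n / 2 + 1),
        (c k : ℂ) * (x * y) ^ (n / 2 - k) * (x ^ 2 + y ^ 2) ^ k := by
  obtain ⟨u, rfl⟩ : ∃ u, n = 8*u+1 := ⟨n/8, by omega⟩
  have hhalf : (8*u+1)/2 = 4*u := by omega
  rw [hhalf] at hc ⊢
  constructor
  · intro k hk
    refine ⟨elC (2*u) k, ?_⟩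
    rw [hc k hk]
    exact coeff_eq u k hk
  · intro x y
    rw [eight_main x y u]
    congr 1
    rw [Ssum]
    refine Finset.sum_congr rfl (fun k hk => ?_)
    have hk' : k ≤ 4*u := by have := Finset.mem_range.1 hk; omega
    rw [hc k hk', coeff_eq u k hk', show 2*(2*u) = 4*u by ring]
    push_cast
    ring
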